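/- Let G be a graph and let K < v(G) be a positive integer. Then there exists a partition 𝒫 of V(G) with |𝒫| ≤ K, such that every part of 𝒫 has at most 2·v(G)/K vertices, and the quotient graph G/𝒫 is stww(G)-degenerate. -/

import Mathlib

noncomputable section

namespace TwwPaper

open Finset

variable {V : Type*}

/-- The number of edges of `G` with both endpoints in `X`. -/
def edgesIn (G : SimpleGraph V) (X : Finset V) : ℕ :=
  Nat.card {e : Sym2 V // e ∈ G.edgeSet ∧ ∀ v ∈ e, v ∈ X}

/-- The number of edges of `G`. -/
def edgeCount (G : SimpleGraph V) : ℕ := Nat.card G.edgeSet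

/-- The maximum average degree of `G`: the maximum over nonempty vertex subsets `X`
of `2 e(G[X]) / |X|`. -/
def mad [Fintype V] (G : SimpleGraph V) : ℝ :=
  ⨆ X : {X : Finset V // X.Nonempty}, (2 * edgesIn G X.1 : ℝ) / X.1.card

/-- The degree of a vertex. -/
def deg (G : SimpleGraph V) (v : V) : ℕ := Nat.card (G.neighborSet v)

/-- The maximum degree `Δ(G)`. -/
def maxDeg [Fintype V] (G : SimpleGraph V) : ℕ := univ.sup (deg G)

/-- `G` is `d`-regular. -/
def IsReg (G : SimpleGraph V) (d : ℕ) : Prop := ∀ v, deg G v = d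

/-- `G` admits an orientation with maximum outdegree at most one:
an assignment of a tail (source) vertex to each edge, no vertex being
the tail of two distinct edges. -/
def HasOrientationOutdegLEOne (G : SimpleGraph V) : Prop :=
  ∃ f : G.edgeSet → V, (∀ e : G.edgeSet, f e ∈ (e : Sym2 V)) ∧ Function.Injective f

/-- Two lists (sequences) of the same length `r` are close if they contain a common
subsequence of length `r - 1`, obtained by deleting one entry from each. -/
def Close {S : Type*} (L M : List S) : Prop :=
  ∃ i < L.length, ∃ j < M.length, L.eraseIdx i = M.eraseIdx j

section Partitions

variable [Fintype V] [DecidableEq V]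

/-- `Q` is obtained from `P` by merging the two distinct parts `A` and `B`. -/
def IsMergeStep (P Q : Finpartition (univ : Finset V)) : Prop :=
  ∃ A ∈ P.parts, ∃ B ∈ P.parts, A ≠ B ∧
    Q.parts = insert (A ∪ B) ((P.parts.erase A).erase B)

/-- Degree of the part `A` in the quotient graph `G / P`. -/
def quotDeg (G : SimpleGraph V) (P : Finpartition (univ : Finset V)) (A : Finset V) : ℕ :=
  Nat.card {B : Finset V // B ∈ P.parts ∧ B ≠ A ∧ ∃ u ∈ A, ∃ v ∈ B, G.Adj u v}

/-- Red degree of the part `A` with respect to the partition `P`: the number of other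
parts `B` which are neither fully adjacent nor fully non-adjacent to `A`. -/
def redDeg (G : SimpleGraph V) (P : Finpartition (univ : Finset V)) (A : Finset V) : ℕ :=
  Nat.card {B : Finset V // B ∈ P.parts ∧ B ≠ A ∧ (∃ u ∈ A, ∃ v ∈ B, G.Adj u v) ∧
    ¬ (∀ u ∈ A, ∀ v ∈ B, G.Adj u v)}

/-- There is a sequence of partitions of `V(G)`, starting at the discrete partition,
ending with at most one part, each obtained from the previous one by merging two parts,
such that every part of every intermediate partition has `degFn`-degree at most `w`. -/
def SeqOK (G : SimpleGraph V)
    (degFn : SimpleGraph V → Finpartition (univ : Finset V) → Finset V → ℕ) (w : ℕ) : Prop :=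
  ∃ n : ℕ, ∃ P : Fin (n + 1) → Finpartition (univ : Finset V),
    (∀ A ∈ (P 0).parts, A.card = 1) ∧
    (P (Fin.last n)).parts.card ≤ 1 ∧
    (∀ i : Fin n, IsMergeStep (P i.castSucc) (P i.succ)) ∧
    (∀ i, ∀ A ∈ (P i).parts, degFn G (P i) A ≤ w)

/-- The sparse twin-width of `G`: the least `w` such that `G` can be contracted to a
single vertex by iterated pairwise identifications with all intermediate (quotient)
graphs of maximum degree at most `w`. -/
def stww (G : SimpleGraph V) : ℕ := sInf {w | SeqOK G quotDeg w}

/-- The twin-width of `G`, via contraction sequences minimizing the maximum red degree. -/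
def tww (G : SimpleGraph V) : ℕ := sInf {w | SeqOK G redDeg w}

/-- The quotient graph `G / P`: parts of `P` are adjacent iff some edge of `G` joins them. -/
def quotGraph (G : SimpleGraph V) (P : Finpartition (univ : Finset V)) :
    SimpleGraph {A : Finset V // A ∈ P.parts} :=
  SimpleGraph.fromRel (fun A B => ∃ u ∈ A.1, ∃ v ∈ B.1, G.Adj u v)

end Partitions

/-- A graph is `w`-degenerate if every nonempty (induced) subgraph has a vertex of
degree at most `w` in it. -/
def Degenerate {W : Type*} (w : ℕ) (H : SimpleGraph W) : Prop :=
  ∀ s : Finset W, s.Nonempty → ∃ a ∈ s, Nat.card {b : W // b ∈ s ∧ H.Adj a b} ≤ w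

/-- The graph `Π(r₁,…,r_a; b, q)`: vertices are tuples `(v₁,…,v_a)` with `vᵢ ∈ [q]^{rᵢ}`,
two tuples being adjacent iff (they are distinct and) at least `b` coordinates are
pairwise equal or close. -/
def PiGraph (a b q : ℕ) (rfn : Fin a → ℕ) : SimpleGraph (∀ i : Fin a, Fin (rfn i) → Fin q) :=
  SimpleGraph.fromRel (fun u v => ∃ I : Finset (Fin a), I.card = b ∧
    ∀ i ∈ I, u i = v i ∨ Close (List.ofFn (u i)) (List.ofFn (v i)))

section Aux
variable [Fintype V] [DecidableEq V]

/-- Build a finpartition of `univ` from a "part-of" map. -/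
def ofParts (p : V → Finset V) (h1 : ∀ x, x ∈ p x)
    (h2 : ∀ x y, y ∈ p x → p y = p x) : Finpartition (univ : Finset V) where
  parts := univ.image p
  supIndep := by
    rw [Finset.supIndep_iff_pairwiseDisjoint]
    rintro A hA B hB hAB
    simp only [coe_image, Set.mem_image] at hA hB
    obtain ⟨x, -, rfl⟩ := hA
    obtain ⟨y, -, rfl⟩ := hB
    exact Finset.disjoint_left.2 fun z hzx hzy => hAB (by rw [← h2 x z hzx, h2 y z hzy])
  sup_parts := by
    apply le_antisymm
    · exact Finset.sup_le fun A _ => Finset.subset_univ A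
    · intro x _
      exact Finset.mem_sup.2 ⟨p x, Finset.mem_image_of_mem p (mem_univ x), h1 x⟩
  bot_notMem := by
    simp only [bot_eq_empty, mem_image]
    rintro ⟨x, -, hx⟩
    exact absurd (h1 x) (by rw [hx]; exact notMem_empty x)

lemma mem_ofParts {p : V → Finset V} {h1 h2} {A : Finset V} :
    A ∈ (ofParts p h1 h2).parts ↔ ∃ x, p x = A := by
  simp [ofParts]

lemma quotDeg_le_card (G : SimpleGraph V) (P : Finpartition (univ : Finset V)) (A : Finset V) :
    quotDeg G P A ≤ P.parts.card := by
  have h1 : Nat.card {B : Finset V // B ∈ P.parts} = P.parts.card := by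
    rw [Nat.card_eq_fintype_card]; exact Fintype.card_coe _
  rw [← h1, quotDeg]
  exact Nat.card_le_card_of_injective (fun b => ⟨b.1, b.2.1⟩)
    (fun b1 b2 h => by
      rw [Subtype.mk.injEq] at h
      exact Subtype.ext h)

end Aux
section Seq
variable [Fintype V] [DecidableEq V]

private def blockFun (σ : Fin (Fintype.card V) ≃ V) (i : ℕ) (x : V) : Finset V :=
  if ((σ.symm x : Fin (Fintype.card V)) : ℕ) ≤ i then
    univ.filter (fun y => ((σ.symm y : Fin (Fintype.card V)) : ℕ) ≤ i) else {x}

private lemma blockFun_h1 (σ : Fin (Fintype.card V) ≃ V) (i : ℕ) (x : V) :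
    x ∈ blockFun σ i x := by
  unfold blockFun
  split
  · exact mem_filter.2 ⟨mem_univ x, by assumption⟩
  · exact mem_singleton_self x

private lemma blockFun_h2 (σ : Fin (Fintype.card V) ≃ V) (i : ℕ) (x y : V)
    (hy : y ∈ blockFun σ i x) : blockFun σ i y = blockFun σ i x := by
  unfold blockFun at *
  split at hy
  · have : ((σ.symm y : Fin (Fintype.card V)) : ℕ) ≤ i := (mem_filter.1 hy).2
    rw [if_pos this, if_pos (by assumption)]
  · rw [mem_singleton.1 hy]

private def seqPart (σ : Fin (Fintype.card V) ≃ V) (i : ℕ) :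
    Finpartition (univ : Finset V) :=
  ofParts (blockFun σ i) (blockFun_h1 σ i) (blockFun_h2 σ i)

lemma seqOK_exists (G : SimpleGraph V) (hV : 0 < Fintype.card V) :
    SeqOK G quotDeg (Fintype.card V) := by
  set n := Fintype.card V with hn
  set σ : Fin n ≃ V := (Fintype.equivFin V).symm with hσ
  refine ⟨n - 1, fun j => seqPart σ (j : ℕ), ?_, ?_, ?_, ?_⟩
  · -- singletons at time 0
    intro A hA
    obtain ⟨x, hx⟩ := mem_ofParts.1 hA
    simp only [Fin.val_zero] at hx
    have : blockFun σ 0 x = {x} := by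
      unfold blockFun
      split
      · ext y
        simp only [mem_filter, mem_univ, true_and, mem_singleton, Nat.le_zero]
        constructor
        · intro h
          have : σ.symm y = σ.symm x := by
            apply Fin.ext
            omega
          exact σ.symm.injective this
        · rintro rfl; omega
      · rfl
    rw [← hx, this, card_singleton]
  · -- one part at the end
    apply Finset.card_le_one.2
    intro A hA B hB
    obtain ⟨x, hx⟩ := mem_ofParts.1 hA
    obtain ⟨y, hy⟩ := mem_ofParts.1 hB
    have hx' : ((σ.symm x : Fin n) : ℕ) ≤ ((Fin.last (n-1) : Fin (n-1+1)) : ℕ) := by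
      have := (σ.symm x).isLt
      simp only [Fin.val_last]
      omega
    have hy' : ((σ.symm y : Fin n) : ℕ) ≤ ((Fin.last (n-1) : Fin (n-1+1)) : ℕ) := by
      have := (σ.symm y).isLt
      simp only [Fin.val_last]
      omega
    rw [← hx, ← hy]
    unfold blockFun
    rw [if_pos hx', if_pos hy']
  · -- merge steps
    intro i
    have hi : (i : ℕ) < n - 1 := i.isLt
    have hi1 : (i : ℕ) + 1 < n := by omega
    set A : Finset V := univ.filter (fun y => ((σ.symm y : Fin n) : ℕ) ≤ (i : ℕ)) with hA
    set B : Finset V := {σ ⟨(i : ℕ) + 1, hi1⟩} with hB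
    have hc : ∀ (x : V), ((σ.symm x : Fin n) : ℕ) = (i : ℕ) + 1 ↔ x = σ ⟨(i : ℕ) + 1, hi1⟩ := by
      intro x
      constructor
      · intro h
        have : σ.symm x = ⟨(i : ℕ) + 1, hi1⟩ := Fin.ext h
        rw [← this, Equiv.apply_symm_apply]
      · rintro rfl; rw [Equiv.symm_apply_apply]
    have hAmem : A ∈ (seqPart σ (i.castSucc : ℕ)).parts := by
      apply mem_ofParts.2 ⟨σ ⟨0, by omega⟩, ?_⟩
      unfold blockFun
      rw [if_pos]
      · rw [Fin.coe_castSucc]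
      · rw [Equiv.symm_apply_apply]; exact Nat.zero_le _
    have hBmem : B ∈ (seqPart σ (i.castSucc : ℕ)).parts := by
      apply mem_ofParts.2 ⟨σ ⟨(i : ℕ) + 1, hi1⟩, ?_⟩
      unfold blockFun
      rw [if_neg]
      rw [Equiv.symm_apply_apply, Fin.coe_castSucc, Fin.val_mk]
      omega
    refine ⟨A, hAmem, B, hBmem, ?_, ?_⟩
    · intro h
      have h0 : σ ⟨0, by omega⟩ ∈ A := by
        rw [hA]
        refine mem_filter.2 ⟨mem_univ _, ?_⟩
        rw [Equiv.symm_apply_apply]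
        exact Nat.zero_le _
      rw [h, hB, mem_singleton] at h0
      have := congrArg σ.symm h0
      rw [Equiv.symm_apply_apply, Equiv.symm_apply_apply] at this
      have := congrArg Fin.val this
      simp at this
    · -- parts equation
      ext X
      constructor
      · intro hX
        obtain ⟨x, hx⟩ := mem_ofParts.1 hX
        by_cases hcx : ((σ.symm x : Fin n) : ℕ) ≤ (i.succ : ℕ)
        · have : X = A ∪ B := by
            rw [← hx]
            unfold blockFun
            rw [if_pos hcx]
            ext y
            simp only [mem_filter, mem_univ, true_and, mem_union, hA, hB, mem_singleton,
              Fin.val_succ, Fin.coe_castSucc, ← hc y]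
            omega
          rw [this]; exact mem_insert_self _ _
        · rw [Fin.val_succ] at hcx
          have hXx : X = {x} := by
            rw [← hx]; unfold blockFun; rw [if_neg (by rw [Fin.val_succ]; exact hcx)]
          apply mem_insert_of_mem
          apply mem_erase.2
          constructor
          · rw [hXx, hB]
            intro h
            have : x = σ ⟨(i : ℕ) + 1, hi1⟩ := by
              have := mem_singleton.1 (h ▸ mem_singleton_self x)
              exact this
            rw [← hc x] at this
            omega
          apply mem_erase.2
          constructor
          · rw [hXx]
            intro h
            have : x ∈ A := h ▸ mem_singleton_self x
            rw [hA, mem_filter] at this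
            omega
          · apply mem_ofParts.2 ⟨x, ?_⟩
            rw [hXx]
            unfold blockFun
            rw [if_neg (by rw [Fin.coe_castSucc]; omega)]
      · intro hX
        rcases mem_insert.1 hX with h | h
        · apply mem_ofParts.2 ⟨σ ⟨0, by omega⟩, ?_⟩
          unfold blockFun
          rw [if_pos (by rw [Equiv.symm_apply_apply]; exact Nat.zero_le _)]
          rw [h]
          ext y
          simp only [mem_filter, mem_univ, true_and, mem_union, hA, hB, mem_singleton,
            Fin.val_succ, Fin.coe_castSucc, ← hc y]
          omega
        · have hXB := (mem_erase.1 h).1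
          have h' := (mem_erase.1 h).2
          have hXA := (mem_erase.1 h').1
          have hXP := (mem_erase.1 h').2
          obtain ⟨x, hx⟩ := mem_ofParts.1 hXP
          have hgt : ¬ ((σ.symm x : Fin n) : ℕ) ≤ (i.castSucc : ℕ) := by
            intro hle
            apply hXA
            rw [← hx]
            unfold blockFun
            rw [if_pos hle, hA, Fin.coe_castSucc]
          have hXx : X = {x} := by
            rw [← hx]; unfold blockFun; rw [if_neg hgt]
          have hne : ((σ.symm x : Fin n) : ℕ) ≠ (i : ℕ) + 1 := by
            intro he
            apply hXB
            rw [hXx, hB, (hc x).1 he]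
          apply mem_ofParts.2 ⟨x, ?_⟩
          unfold blockFun
          rw [Fin.coe_castSucc] at hgt
          rw [if_neg (by rw [Fin.val_succ]; omega)]
          exact hXx.symm
  · -- degrees
    intro j A _
    calc quotDeg G (seqPart σ (j : ℕ)) A ≤ (seqPart σ (j : ℕ)).parts.card := quotDeg_le_card _ _ _
    _ ≤ (univ : Finset V).card := Finpartition.card_parts_le_card _
    _ = n := by rw [card_univ]

end Seq

section Main
variable {n' : ℕ} [Fintype V] [DecidableEq V]
variable (K : ℕ) (P : Fin (n' + 1) → Finpartition (univ : Finset V))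
variable (hm : ∀ i : Fin n', IsMergeStep (P i.castSucc) (P i.succ))

/-- The `k`-th partition of the sequence, reindexed over `ℕ`. -/
def Pn (k : ℕ) : Finpartition (univ : Finset V) := P ⟨min k n', by omega⟩

lemma Pn_succ_eq {k : ℕ} (h : ¬ k < n') : Pn P (k + 1) = Pn P k := by
  unfold Pn
  congr 1
  exact Fin.ext (by simp only []; omega)

include hm

lemma mergeSpec {k : ℕ} (h : k < n') :
    ∃ A B, A ∈ (Pn P k).parts ∧ B ∈ (Pn P k).parts ∧ A ≠ B ∧
      (Pn P (k+1)).parts = insert (A ∪ B) (((Pn P k).parts.erase A).erase B) := by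
  obtain ⟨A, hA, B, hB, hne, heq⟩ := hm ⟨k, h⟩
  have e1 : Pn P k = P (Fin.castSucc ⟨k, h⟩) := by
    unfold Pn; congr 1
    exact Fin.ext (by simp only [Fin.coe_castSucc, Fin.val_mk]; omega)
  have e2 : Pn P (k+1) = P (Fin.succ ⟨k, h⟩) := by
    unfold Pn; congr 1
    exact Fin.ext (by simp only [Fin.val_succ, Fin.val_mk]; omega)
  exact ⟨A, B, e1 ▸ hA, e1 ▸ hB, hne, by rw [e1, e2, heq]⟩

/-- The merged part created at step `k` (junk value `∅` if there is no step `k`). -/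
def mN (k : ℕ) : Finset V :=
  if h : k < n' then (mergeSpec P hm h).choose ∪ (mergeSpec P hm h).choose_spec.choose else ∅

lemma mN_spec {k : ℕ} (h : k < n') :
    ∃ A B, A ∈ (Pn P k).parts ∧ B ∈ (Pn P k).parts ∧ A ≠ B ∧ mN P hm k = A ∪ B ∧
      (Pn P (k+1)).parts = insert (mN P hm k) (((Pn P k).parts.erase A).erase B) := by
  have hd : mN P hm k = (mergeSpec P hm h).choose ∪ (mergeSpec P hm h).choose_spec.choose :=
    dif_pos h
  obtain ⟨hA, hB, hne, heq⟩ := (mergeSpec P hm h).choose_spec.choose_spec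
  exact ⟨_, _, hA, hB, hne, hd, by rw [hd]; exact heq⟩

lemma mN_empty {k : ℕ} (h : ¬ k < n') : mN P hm k = ∅ := dif_neg h

lemma mN_mem {k : ℕ} (h : k < n') : mN P hm k ∈ (Pn P (k+1)).parts := by
  obtain ⟨A, B, -, -, -, -, heq⟩ := mN_spec P hm h
  rw [heq]; exact mem_insert_self _ _

/-- The collection of frozen classes after `k` steps of the freezing simulation. -/
def Fro : ℕ → Finset (Finset V)
  | 0 => ∅
  | (k+1) =>
      if Fintype.card V < K * ((mN P hm k) \ (Fro k).sup id).card then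
        insert ((mN P hm k) \ (Fro k).sup id) (Fro k)
      else Fro k

/-- The set of frozen vertices after `k` steps. -/
def Ufz (k : ℕ) : Finset V := (Fro K P hm k).sup id

lemma fro_succ_def (k : ℕ) : Fro K P hm (k+1) =
    (if Fintype.card V < K * ((mN P hm k) \ Ufz K P hm k).card then
      insert ((mN P hm k) \ Ufz K P hm k) (Fro K P hm k)
    else Fro K P hm k) := rfl

lemma fro_subset_succ (k : ℕ) : Fro K P hm k ⊆ Fro K P hm (k+1) := by
  rw [fro_succ_def]
  split
  · exact subset_insert _ _
  · exact Finset.Subset.refl _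

lemma fro_mono {i j : ℕ} (h : i ≤ j) : Fro K P hm i ⊆ Fro K P hm j := by
  induction j, h using Nat.le_induction with
  | base => exact Finset.Subset.refl _
  | succ j hij ih => exact ih.trans (fro_subset_succ K P hm j)

lemma Ufz_mono {i j : ℕ} (h : i ≤ j) : Ufz K P hm i ⊆ Ufz K P hm j := by
  have := Finset.sup_mono (f := id) (fro_mono K P hm h)
  exact this

lemma subset_Ufz {k : ℕ} {C : Finset V} (hC : C ∈ Fro K P hm k) : C ⊆ Ufz K P hm k :=
  Finset.le_sup (f := id) hC

/-- Analysis of a newly frozen class. -/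
lemma mem_fro_succ {k : ℕ} {C : Finset V} (hC : C ∈ Fro K P hm (k+1))
    (hC' : C ∉ Fro K P hm k) :
    k < n' ∧ C = mN P hm k \ Ufz K P hm k ∧ Fintype.card V < K * C.card ∧
      Fro K P hm (k+1) = insert C (Fro K P hm k) := by
  have hd := fro_succ_def K P hm k
  rw [hd] at hC
  split at hC
  · next hcond =>
    have hCe : C = mN P hm k \ Ufz K P hm k := by
      rcases mem_insert.1 hC with h | h
      · exact h
      · exact absurd h hC'
    have hk : k < n' := by
      by_contra hk
      rw [mN_empty P hm hk] at hcond
      simp at hcond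
    refine ⟨hk, hCe, by rw [hCe]; exact hcond, by rw [hd, if_pos hcond, hCe]⟩
  · exact absurd hC hC'

lemma fro_steady {k : ℕ} (h : n' ≤ k) : Fro K P hm k = Fro K P hm n' := by
  induction k with
  | zero =>
    have hz : n' = 0 := by omega
    subst hz
    rfl
  | succ k ih =>
    rcases Nat.lt_or_ge n' (k+1) with h' | h'
    · have hk : n' ≤ k := by omega
      have hne : ¬ k < n' := by omega
      have heq : Fro K P hm (k+1) = Fro K P hm k := by
        rw [fro_succ_def, mN_empty P hm hne]
        simp
      rw [heq, ih hk]
    · have heq : n' = k + 1 := by omega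
      subst heq
      rfl

/-- The active part of each part stays small. -/
lemma act_small (hsing : ∀ A ∈ (P 0).parts, A.card = 1) (hKn : K ≤ Fintype.card V) :
    ∀ k, ∀ Q ∈ (Pn P k).parts, K * (Q \ Ufz K P hm k).card ≤ Fintype.card V := by
  intro k
  induction k with
  | zero =>
    intro Q hQ
    have h0 : Pn P 0 = P 0 := by
      unfold Pn; congr 1
    rw [h0] at hQ
    have : (Q \ Ufz K P hm 0).card ≤ 1 := by
      calc (Q \ Ufz K P hm 0).card ≤ Q.card := card_le_card (sdiff_subset)
      _ = 1 := hsing Q hQ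
    calc K * (Q \ Ufz K P hm 0).card ≤ K * 1 := Nat.mul_le_mul_left K this
    _ = K := Nat.mul_one K
    _ ≤ Fintype.card V := hKn
  | succ k ih =>
    intro Q hQ
    rcases Nat.lt_or_ge k n' with hk | hk
    · obtain ⟨A, B, hA, hB, hne, hNeq, heq⟩ := mN_spec P hm hk
      have hUcase := fro_succ_def K P hm k
      rw [heq] at hQ
      rcases mem_insert.1 hQ with rfl | hQ'
      · -- Q is the new merged part
        by_cases hcond : Fintype.card V < K * ((mN P hm k) \ Ufz K P hm k).card
        · -- frozen: active part is now empty
          have hU : Ufz K P hm (k+1) = (mN P hm k \ Ufz K P hm k) ⊔ Ufz K P hm k := by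
            unfold Ufz
            rw [hUcase, if_pos hcond, Finset.sup_insert]
            rfl
          have : mN P hm k \ Ufz K P hm (k+1) = ∅ := by
            rw [hU]
            ext x
            simp only [mem_sdiff, Finset.sup_eq_union, mem_union, notMem_empty, iff_false]
            rintro ⟨hx, hx2⟩
            by_cases hxu : x ∈ Ufz K P hm k
            · exact hx2 (Or.inr hxu)
            · exact hx2 (Or.inl ⟨hx, hxu⟩)
          rw [this]
          simp
        · have hU : Ufz K P hm (k+1) = Ufz K P hm k := by
            unfold Ufz; rw [hUcase, if_neg hcond]
          rw [hU]
          omega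
      · -- Q is an old part
        have hQold : Q ∈ (Pn P k).parts := mem_of_mem_erase (mem_of_mem_erase hQ')
        have hsub : Q \ Ufz K P hm (k+1) ⊆ Q \ Ufz K P hm k :=
          sdiff_subset_sdiff (Finset.Subset.refl Q) (Ufz_mono K P hm (Nat.le_succ k))
        calc K * (Q \ Ufz K P hm (k+1)).card ≤ K * (Q \ Ufz K P hm k).card :=
              Nat.mul_le_mul_left K (card_le_card hsub)
        _ ≤ Fintype.card V := ih Q hQold
    · have hne : ¬ k < n' := by omega
      rw [Pn_succ_eq P hne] at hQ
      have hfro : Fro K P hm (k+1) = Fro K P hm k := by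
        rw [fro_succ_def, mN_empty P hm hne]
        simp
      have hU : Ufz K P hm (k+1) = Ufz K P hm k := by unfold Ufz; rw [hfro]
      rw [hU]
      exact ih Q hQ

/-- Frozen classes have size between `n/K` (strictly) and `2n/K`. -/
lemma fro_size (hsing : ∀ A ∈ (P 0).parts, A.card = 1) (hKn : K ≤ Fintype.card V) :
    ∀ k, ∀ C ∈ Fro K P hm k,
      Fintype.card V < K * C.card ∧ K * C.card ≤ 2 * Fintype.card V := by
  intro k
  induction k with
  | zero => intro C hC; exact absurd hC (notMem_empty C)
  | succ k ih =>
    intro C hC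
    by_cases hold : C ∈ Fro K P hm k
    · exact ih C hold
    · obtain ⟨hk, hCe, hbig, -⟩ := mem_fro_succ K P hm hC hold
      refine ⟨hbig, ?_⟩
      obtain ⟨A, B, hA, hB, -, hNeq, -⟩ := mN_spec P hm hk
      have hsub : C ⊆ (A \ Ufz K P hm k) ∪ (B \ Ufz K P hm k) := by
        rw [hCe, hNeq]
        intro x hx
        rw [mem_sdiff, mem_union] at hx
        rcases hx.1 with h | h
        · exact mem_union_left _ (mem_sdiff.2 ⟨h, hx.2⟩)
        · exact mem_union_right _ (mem_sdiff.2 ⟨h, hx.2⟩)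
      calc K * C.card ≤ K * ((A \ Ufz K P hm k).card + (B \ Ufz K P hm k).card) :=
            Nat.mul_le_mul_left K ((card_le_card hsub).trans (card_union_le _ _))
      _ = K * (A \ Ufz K P hm k).card + K * (B \ Ufz K P hm k).card := Nat.mul_add K _ _
      _ ≤ Fintype.card V + Fintype.card V :=
            Nat.add_le_add (act_small K P hm hsing hKn k A hA) (act_small K P hm hsing hKn k B hB)
      _ = 2 * Fintype.card V := by omega

lemma fro_disj (k : ℕ) : ∀ C ∈ Fro K P hm k, ∀ D ∈ Fro K P hm k, C ≠ D → Disjoint C D := by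
  induction k with
  | zero => intro C hC; exact absurd hC (notMem_empty C)
  | succ k ih =>
    intro C hC D hD hne
    by_cases hCo : C ∈ Fro K P hm k <;> by_cases hDo : D ∈ Fro K P hm k
    · exact ih C hCo D hDo hne
    · obtain ⟨-, hDe, -, -⟩ := mem_fro_succ K P hm hD hDo
      rw [hDe]
      exact (Finset.sdiff_disjoint.mono_right (subset_Ufz K P hm hCo)).symm
    · obtain ⟨-, hCe, -, -⟩ := mem_fro_succ K P hm hC hCo
      rw [hCe]
      exact Finset.sdiff_disjoint.mono_right (subset_Ufz K P hm hDo)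
    · obtain ⟨-, hCe, -, -⟩ := mem_fro_succ K P hm hC hCo
      obtain ⟨-, hDe, -, -⟩ := mem_fro_succ K P hm hD hDo
      exact absurd (hCe.trans hDe.symm) hne

/-- Laminarity: parts only grow along the sequence. -/
lemma part_up {i j : ℕ} (hij : i ≤ j) {Q : Finset V} (hQ : Q ∈ (Pn P i).parts) :
    ∃ Q', Q' ∈ (Pn P j).parts ∧ Q ⊆ Q' := by
  induction j, hij using Nat.le_induction with
  | base => exact ⟨Q, hQ, Finset.Subset.refl Q⟩
  | succ j hij ih =>
    obtain ⟨Q', hQ', hsub⟩ := ih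
    rcases Nat.lt_or_ge j n' with hj | hj
    · obtain ⟨A, B, hA, hB, hne, hNeq, heq⟩ := mN_spec P hm hj
      by_cases hQA : Q' = A
      · refine ⟨mN P hm j, mN_mem P hm hj, ?_⟩
        rw [hNeq]
        exact hsub.trans (hQA ▸ Finset.subset_union_left)
      by_cases hQB : Q' = B
      · refine ⟨mN P hm j, mN_mem P hm hj, ?_⟩
        rw [hNeq]
        exact hsub.trans (hQB ▸ Finset.subset_union_right)
      · refine ⟨Q', ?_, hsub⟩
        rw [heq]
        exact mem_insert_of_mem (mem_erase.2 ⟨hQB, mem_erase.2 ⟨hQA, hQ'⟩⟩)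
    · refine ⟨Q', ?_, hsub⟩
      rw [Pn_succ_eq P (by omega : ¬ j < n')]
      exact hQ'

/-- Key invariant: the active part of a part of `Pn i` either stays constant or vanishes. -/
lemma act_stable {i : ℕ} {Q : Finset V} (hQ : Q ∈ (Pn P i).parts) :
    ∀ j, i ≤ j → Q \ Ufz K P hm j = Q \ Ufz K P hm i ∨ Q \ Ufz K P hm j = ∅ := by
  intro j hij
  induction j, hij using Nat.le_induction with
  | base => exact Or.inl rfl
  | succ j hij ih =>
    by_cases hcond : Fintype.card V < K * ((mN P hm j \ Ufz K P hm j)).card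
    · have hfro : Fro K P hm (j+1) = insert (mN P hm j \ Ufz K P hm j) (Fro K P hm j) := by
        rw [fro_succ_def, if_pos hcond]
      have hU : Ufz K P hm (j+1) = (mN P hm j \ Ufz K P hm j) ∪ Ufz K P hm j := by
        unfold Ufz; rw [hfro, Finset.sup_insert]; rfl
      have hsplit : Q \ Ufz K P hm (j+1) = (Q \ Ufz K P hm j) \ (mN P hm j \ Ufz K P hm j) := by
        rw [hU]; ext x; simp only [mem_sdiff, mem_union]; tauto
      have hj : j < n' := by
        by_contra hj
        rw [mN_empty P hm hj] at hcond
        simp at hcond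
      by_cases hmeet : ((Q \ Ufz K P hm j) ∩ (mN P hm j \ Ufz K P hm j)).Nonempty
      · obtain ⟨v, hv⟩ := hmeet
        rw [mem_inter, mem_sdiff] at hv
        have hvN : v ∈ mN P hm j := (mem_sdiff.1 hv.2).1
        obtain ⟨Q'', hQ'', hQQ''⟩ := part_up P hm (by omega : i ≤ j + 1) hQ
        have hQ''N : Q'' = mN P hm j :=
          (Pn P (j+1)).eq_of_mem_parts hQ'' (mN_mem P hm hj) (hQQ'' hv.1.1) hvN
        have hQN : Q ⊆ mN P hm j := hQ''N ▸ hQQ''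
        right
        rw [hsplit]
        ext x
        simp only [mem_sdiff, notMem_empty, iff_false]
        rintro ⟨⟨hxQ, hxU⟩, hxX⟩
        exact hxX ⟨hQN hxQ, hxU⟩
      · have hss : (Q \ Ufz K P hm j) \ (mN P hm j \ Ufz K P hm j) = Q \ Ufz K P hm j := by
          rw [Finset.sdiff_eq_self_iff_disjoint, Finset.disjoint_left]
          intro x hxQ hxX
          exact hmeet ⟨x, mem_inter.2 ⟨hxQ, hxX⟩⟩
        rw [hsplit, hss]
        exact ih
    · have hfro : Fro K P hm (j+1) = Fro K P hm j := by
        rw [fro_succ_def, if_neg hcond]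
      have hU : Ufz K P hm (j+1) = Ufz K P hm j := by unfold Ufz; rw [hfro]
      rw [hU]
      exact ih

lemma fro_big {k : ℕ} {C : Finset V} (hC : C ∈ Fro K P hm k) :
    Fintype.card V < K * C.card := by
  induction k with
  | zero => exact absurd hC (notMem_empty C)
  | succ k ih =>
    by_cases hold : C ∈ Fro K P hm k
    · exact ih hold
    · exact (mem_fro_succ K P hm hC hold).2.2.1

open scoped Classical in
def tauF (C : Finset V) : ℕ :=
  if h : ∃ k, C ∈ Fro K P hm k then Nat.find h else n' + 1

lemma tauF_pos {C : Finset V} (h : ∃ k, C ∈ Fro K P hm k) : tauF K P hm C = Nat.find h :=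
  dif_pos h

lemma tauF_neg {C : Finset V} (h : ¬ ∃ k, C ∈ Fro K P hm k) : tauF K P hm C = n' + 1 :=
  dif_neg h

/-- The main degeneracy argument. -/
lemma degen (G : SimpleGraph V) (w : ℕ) (QP : Finpartition (univ : Finset V))
    (hQparts : ∀ D ∈ QP.parts, D ∈ Fro K P hm n' ∨ D = univ \ Ufz K P hm n')
    (hdeg : ∀ i, ∀ A ∈ (P i).parts, quotDeg G (P i) A ≤ w) :
    Degenerate w (quotGraph G QP) := by
  classical
  intro s hs
  have htau_frozen : ∀ C : Finset V, C ∉ Fro K P hm n' → (¬ ∃ k, C ∈ Fro K P hm k) ∨ C = ∅ := by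
    intro C hCF
    by_cases hex : ∃ k, C ∈ Fro K P hm k
    · obtain ⟨k, hk⟩ := hex
      rcases le_or_gt k n' with h | h
      · exact absurd (fro_mono K P hm h hk) hCF
      · rw [fro_steady K P hm (by omega)] at hk
        exact absurd hk hCF
    · exact Or.inl hex
  have htau_le : ∀ C ∈ Fro K P hm n', tauF K P hm C ≤ n' := by
    intro C hC
    rw [tauF_pos K P hm ⟨n', hC⟩]
    exact Nat.find_le hC
  obtain ⟨a, has, hamin⟩ := Finset.exists_min_image s (fun b => tauF K P hm b.1) hs
  refine ⟨a, has, ?_⟩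
  by_cases haF : a.1 ∈ Fro K P hm n'
  · -- main case: `a` is a frozen class
    have hex : ∃ k, a.1 ∈ Fro K P hm k := ⟨n', haF⟩
    have htaua : tauF K P hm a.1 = Nat.find hex := tauF_pos K P hm hex
    have h1 : a.1 ∈ Fro K P hm (Nat.find hex) := Nat.find_spec hex
    have hpos : Nat.find hex ≠ 0 := by
      intro h
      rw [h] at h1
      exact absurd h1 (notMem_empty _)
    have hfind : Nat.find hex = (Nat.find hex - 1) + 1 := by omega
    have h2 : a.1 ∉ Fro K P hm (Nat.find hex - 1) := Nat.find_min hex (by omega)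
    obtain ⟨hmn', haEq, habig, hins⟩ := mem_fro_succ K P hm (hfind ▸ h1) h2
    have htaua' : tauF K P hm a.1 = (Nat.find hex - 1) + 1 := by rw [htaua]; omega
    obtain ⟨m, hmn', htaua', haEq, hins⟩ :
        ∃ m, m < n' ∧ tauF K P hm a.1 = m + 1 ∧
          (a.1 : Finset V) = mN P hm m \ Ufz K P hm m ∧
          Fro K P hm (m + 1) = insert (a.1 : Finset V) (Fro K P hm m) :=
      ⟨Nat.find hex - 1, hmn', htaua', haEq, hins⟩
    -- `t` below denotes `m + 1`, the freeze time of `a`.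
    have htle : m + 1 ≤ n' := hmn'
    have hN : mN P hm m ∈ (Pn P (m + 1)).parts :=
      mN_mem P hm hmn'
    have hU : Ufz K P hm (m + 1) = a.1 ∪ Ufz K P hm m := by
      unfold Ufz
      rw [hins, Finset.sup_insert]
      rfl
    have hNact : mN P hm m \ Ufz K P hm (m + 1) = ∅ := by
      rw [hU]
      ext x
      simp only [mem_sdiff, mem_union, notMem_empty, iff_false]
      rintro ⟨hx, hx2⟩
      by_cases hxu : x ∈ Ufz K P hm m
      · exact hx2 (Or.inr hxu)
      · exact hx2 (Or.inl (by rw [haEq]; exact mem_sdiff.2 ⟨hx, hxu⟩))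
    -- strict minimality of the freeze time of `a` in `s`
    have hbt : ∀ b : {A // A ∈ QP.parts}, b ∈ s → b.1 ≠ a.1 →
        m + 1 < tauF K P hm b.1 := by
      intro b hbs hbne
      have hle : tauF K P hm a.1 ≤ tauF K P hm b.1 := hamin b hbs
      by_cases hbF : b.1 ∈ Fro K P hm n'
      · have hexb : ∃ k, b.1 ∈ Fro K P hm k := ⟨n', hbF⟩
        have htaub : tauF K P hm b.1 = Nat.find hexb := tauF_pos K P hm hexb
        have hne : tauF K P hm b.1 ≠ tauF K P hm a.1 := by
          intro heq
          have hb1 : b.1 ∈ Fro K P hm (m + 1) := by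
            have := Nat.find_spec hexb
            rw [← htaub, heq, htaua'] at this
            exact this
          have hb2 : b.1 ∉ Fro K P hm m := by
            have := Nat.find_min hexb (show m < Nat.find hexb by
              rw [← htaub, heq, htaua']; omega)
            exact this
          rw [hins] at hb1
          rcases mem_insert.1 hb1 with h | h
          · exact hbne h
          · exact hb2 h
        omega
      · rcases htau_frozen b.1 hbF with hnex | hemp
        · have : tauF K P hm b.1 = n' + 1 := tauF_neg K P hm hnex
          omega
        · exfalso
          apply QP.bot_notMem
          rw [Finset.bot_eq_empty, ← hemp]
          exact b.2
    -- key containment lemma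
    have hkey : ∀ D ∈ QP.parts, m + 1 < tauF K P hm D → ∀ x ∈ D,
        x ∉ Ufz K P hm (m + 1) ∧
        ∀ Qp ∈ (Pn P (m + 1)).parts, x ∈ Qp →
          Qp \ Ufz K P hm (m + 1) ⊆ D := by
      intro D hD hDt x hxD
      by_cases hDF : D ∈ Fro K P hm n'
      · have hexD : ∃ k, D ∈ Fro K P hm k := ⟨n', hDF⟩
        have htD : tauF K P hm D = Nat.find hexD := tauF_pos K P hm hexD
        have hD1 : D ∈ Fro K P hm (Nat.find hexD) := Nat.find_spec hexD
        have hDpos : Nat.find hexD ≠ 0 := by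
          intro h
          rw [h] at hD1
          exact absurd hD1 (notMem_empty _)
        have hDfind : Nat.find hexD = (Nat.find hexD - 1) + 1 := by omega
        have hD2 : D ∉ Fro K P hm (Nat.find hexD - 1) := Nat.find_min hexD (by omega)
        obtain ⟨hDn', hDEq, -, -⟩ := mem_fro_succ K P hm (hDfind ▸ hD1) hD2
        have htm' : m + 1 ≤ Nat.find hexD - 1 := by
          rw [htD] at hDt
          omega
        have hxU' : x ∉ Ufz K P hm (Nat.find hexD - 1) := by
          rw [hDEq] at hxD
          exact (mem_sdiff.1 hxD).2
        have hxUt : x ∉ Ufz K P hm (m + 1) :=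
          fun h => hxU' (Ufz_mono K P hm htm' h)
        refine ⟨hxUt, ?_⟩
        intro Qp hQp hxQp
        have hxN : x ∈ mN P hm (Nat.find hexD - 1) := by
          rw [hDEq] at hxD
          exact (mem_sdiff.1 hxD).1
        obtain ⟨Q'', hQ'', hsub⟩ := part_up P hm (show m + 1 ≤
          (Nat.find hexD - 1) + 1 by omega) hQp
        have hQ''N : Q'' = mN P hm (Nat.find hexD - 1) :=
          (Pn P ((Nat.find hexD - 1) + 1)).eq_of_mem_parts hQ''
            (mN_mem P hm hDn') (hsub hxQp) hxN
        have hQpN : Qp ⊆ mN P hm (Nat.find hexD - 1) := hQ''N ▸ hsub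
        have hstab := act_stable K P hm hQp (Nat.find hexD - 1) htm'
        have hxQm' : x ∈ Qp \ Ufz K P hm (Nat.find hexD - 1) := mem_sdiff.2 ⟨hxQp, hxU'⟩
        rcases hstab with hst | hst
        · intro y hy
          rw [← hst] at hy
          rw [hDEq]
          exact mem_sdiff.2 ⟨hQpN (mem_sdiff.1 hy).1, (mem_sdiff.1 hy).2⟩
        · rw [hst] at hxQm'
          exact absurd hxQm' (notMem_empty x)
      · have hDL : D = univ \ Ufz K P hm n' := by
          rcases hQparts D hD with h | h
          · exact absurd h hDF
          · exact h
        have hxU : x ∉ Ufz K P hm n' := by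
          rw [hDL] at hxD
          exact (mem_sdiff.1 hxD).2
        have hxUt : x ∉ Ufz K P hm (m + 1) :=
          fun h => hxU (Ufz_mono K P hm htle h)
        refine ⟨hxUt, fun Qp hQp hxQp => ?_⟩
        have hstab := act_stable K P hm hQp n' htle
        have hx' : x ∈ Qp \ Ufz K P hm n' := mem_sdiff.2 ⟨hxQp, hxU⟩
        rcases hstab with hst | hst
        · intro y hy
          rw [← hst] at hy
          rw [hDL]
          exact mem_sdiff.2 ⟨mem_univ y, (mem_sdiff.1 hy).2⟩
        · rw [hst] at hx'
          exact absurd hx' (notMem_empty x)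
    -- extract an edge from adjacency in the quotient graph
    have hedge : ∀ b : {b : {A // A ∈ QP.parts} // b ∈ s ∧ (quotGraph G QP).Adj a b},
        ∃ u v, u ∈ a.1 ∧ v ∈ b.1.1.1 ∧ G.Adj u v := by
      rintro ⟨b, hbs, hAdj⟩
      rw [quotGraph, SimpleGraph.fromRel_adj] at hAdj
      rcases hAdj.2 with h | h
      · obtain ⟨u, hu, v, hv, hadj⟩ := h
        exact ⟨u, v, hu, hv, hadj⟩
      · obtain ⟨u, hu, v, hv, hadj⟩ := h
        exact ⟨v, u, hv, hu, hadj.symm⟩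
    have hbne : ∀ b : {b : {A // A ∈ QP.parts} // b ∈ s ∧ (quotGraph G QP).Adj a b},
        b.1.1 ≠ a.1 := by
      intro b hb
      exact (b.2.2.ne' : b.1 ≠ a) (Subtype.ext hb)
    have hquot : quotDeg G (Pn P (m + 1)) (mN P hm m) ≤ w :=
      hdeg _ _ hN
    rw [quotDeg] at hquot
    refine le_trans (Nat.card_le_card_of_injective ?_ ?_) hquot
    · -- the injection
      intro b
      refine ⟨(Pn P (m + 1)).part ((hedge b).choose_spec.choose), ?_, ?_, ?_⟩
      · exact (Pn P (m + 1)).part_mem.2 (mem_univ _)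
      · -- the part of v is not N
        intro hPN
        have hv := (hedge b).choose_spec.choose_spec.2.1
        have hkb := hkey b.1.1 b.1.2 (hbt b.1 b.2.1 (hbne b)) _ hv
        have hvP : (hedge b).choose_spec.choose ∈
            (Pn P (m + 1)).part ((hedge b).choose_spec.choose) :=
          (Pn P (m + 1)).mem_part (mem_univ _)
        rw [hPN] at hvP
        have : (hedge b).choose_spec.choose ∈
            mN P hm m \ Ufz K P hm (m + 1) :=
          mem_sdiff.2 ⟨hvP, hkb.1⟩
        rw [hNact] at this
        exact absurd this (notMem_empty _)
      · -- there is an edge between N and the part of v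
        refine ⟨(hedge b).choose, ?_, (hedge b).choose_spec.choose, ?_, ?_⟩
        · have hu := (hedge b).choose_spec.choose_spec.1
          have hsubN : (a.1 : Finset V) ⊆ mN P hm m := by
            rw [haEq]
            exact sdiff_subset
          exact hsubN hu
        · exact (Pn P (m + 1)).mem_part (mem_univ _)
        · exact (hedge b).choose_spec.choose_spec.2.2
    · -- injectivity
      intro b1 b2 hf
      rw [Subtype.mk.injEq] at hf
      have hv1 := (hedge b1).choose_spec.choose_spec.2.1
      have hv2 := (hedge b2).choose_spec.choose_spec.2.1
      have hk1 := hkey b1.1.1 b1.1.2 (hbt b1.1 b1.2.1 (hbne b1)) _ hv1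
      have hk2 := hkey b2.1.1 b2.1.2 (hbt b2.1 b2.2.1 (hbne b2)) _ hv2
      set Qq := (Pn P (m + 1)).part ((hedge b1).choose_spec.choose) with hQq
      have hQmem : Qq ∈ (Pn P (m + 1)).parts :=
        (Pn P (m + 1)).part_mem.2 (mem_univ _)
      have hv1Q : (hedge b1).choose_spec.choose ∈ Qq :=
        (Pn P (m + 1)).mem_part (mem_univ _)
      have hv2Q : (hedge b2).choose_spec.choose ∈ Qq := by
        rw [hf]
        exact (Pn P (m + 1)).mem_part (mem_univ _)
      have hsub1 := hk1.2 Qq hQmem hv1Q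
      have hsub2 := hk2.2 Qq hQmem hv2Q
      have hv1in : (hedge b1).choose_spec.choose ∈ Qq \ Ufz K P hm (m + 1) :=
        mem_sdiff.2 ⟨hv1Q, hk1.1⟩
      have hDeq : b1.1.1 = b2.1.1 :=
        QP.eq_of_mem_parts b1.1.2 b2.1.2 (hsub1 hv1in) (hsub2 hv1in)
      exact Subtype.ext (Subtype.ext hDeq)
  · -- `a` is the leftover class: `s = {a}` and the degree is `0`
    have haL : a.1 = univ \ Ufz K P hm n' := by
      rcases hQparts a.1 a.2 with h | h
      · exact absurd h haF
      · exact h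
    have htauaL : tauF K P hm a.1 = n' + 1 := by
      rcases htau_frozen a.1 haF with hnex | hemp
      · exact tauF_neg K P hm hnex
      · exfalso
        apply QP.bot_notMem
        rw [Finset.bot_eq_empty, ← hemp]
        exact a.2
    have : IsEmpty {b : {A // A ∈ QP.parts} // b ∈ s ∧ (quotGraph G QP).Adj a b} := by
      constructor
      rintro ⟨b, hbs, hAdj⟩
      have hbne : b ≠ a := hAdj.ne'
      have hbF : b.1 ∉ Fro K P hm n' := by
        intro hbF
        have := htau_le b.1 hbF
        have := hamin b hbs
        omega
      have hbL : b.1 = univ \ Ufz K P hm n' := by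
        rcases hQparts b.1 b.2 with h | h
        · exact absurd h hbF
        · exact h
      exact hbne (Subtype.ext (hbL.trans haL.symm))
    rw [Nat.card_of_isEmpty]
    exact Nat.zero_le w

lemma main_result (G : SimpleGraph V) (w : ℕ) (hK0 : 0 < K) (hK : K < Fintype.card V)
    (hsing : ∀ A ∈ (P 0).parts, A.card = 1)
    (hlast : (P (Fin.last n')).parts.card ≤ 1)
    (hdeg : ∀ i, ∀ A ∈ (P i).parts, quotDeg G (P i) A ≤ w) :
    ∃ Q : Finpartition (Finset.univ : Finset V), Q.parts.card ≤ K ∧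
      (∀ A ∈ Q.parts, (A.card : ℝ) ≤ 2 * (Fintype.card V : ℝ) / K) ∧
      Degenerate w (quotGraph G Q) := by
  have hKn : K ≤ Fintype.card V := hK.le
  have hV : 0 < Fintype.card V := by omega
  have hreal : ∀ c : ℕ, K * c ≤ 2 * Fintype.card V →
      (c : ℝ) ≤ 2 * (Fintype.card V : ℝ) / K := by
    intro c hc
    rw [le_div_iff₀ (by exact_mod_cast hK0 : (0:ℝ) < (K:ℝ))]
    have h2 : c * K ≤ 2 * Fintype.card V := by rw [Nat.mul_comm]; exact hc
    exact_mod_cast h2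
  have hPnlast : Pn P n' = P (Fin.last n') := by
    unfold Pn; congr 1
    exact Fin.ext (by simp only [Fin.val_mk, Fin.val_last]; omega)
  -- leftover size
  have hLsmall : K * (univ \ Ufz K P hm n').card ≤ Fintype.card V := by
    obtain ⟨v⟩ := Fintype.card_pos_iff.1 hV
    obtain ⟨T, hT, hvT⟩ := (Pn P n').exists_mem (mem_univ v)
    have hTuniv : T = univ := by
      have h1 : (Pn P n').parts = {T} := by
        apply Finset.eq_singleton_iff_unique_mem.2
        refine ⟨hT, fun B hB => ?_⟩
        have hcard : (Pn P n').parts.card ≤ 1 := by rw [hPnlast]; exact hlast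
        exact Finset.card_le_one.1 hcard B hB T hT
      have h2 := (Pn P n').sup_parts
      rw [h1, Finset.sup_singleton] at h2
      exact h2
    have h3 := act_small K P hm hsing hKn n' T hT
    rw [hTuniv] at h3
    exact h3
  have hnotbotF : (∅ : Finset V) ∉ Fro K P hm n' := by
    intro h
    have := fro_big K P hm h
    simp at this
  -- number of frozen classes
  have hdisj : ∀ x ∈ Fro K P hm n', ∀ y ∈ Fro K P hm n', x ≠ y → Disjoint (id x) (id y) :=
    fun x hx y hy hxy => fro_disj K P hm n' x hx y hy hxy
  have hcount : (Fro K P hm n').card < K := by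
    have hsum : ∑ C ∈ Fro K P hm n', C.card = ((Fro K P hm n').biUnion id).card :=
      (Finset.card_biUnion hdisj).symm
    have hUcard : ((Fro K P hm n').biUnion id).card ≤ Fintype.card V := by
      calc ((Fro K P hm n').biUnion id).card ≤ (univ : Finset V).card :=
            card_le_card (subset_univ _)
      _ = Fintype.card V := card_univ
    have hlower : ∀ C ∈ Fro K P hm n', Fintype.card V + 1 ≤ K * C.card :=
      fun C hC => fro_big K P hm hC
    have hc1 : (Fro K P hm n').card * (Fintype.card V + 1) ≤ K * Fintype.card V := by
      calc (Fro K P hm n').card * (Fintype.card V + 1)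
          = ∑ _C ∈ Fro K P hm n', (Fintype.card V + 1) := by
            rw [Finset.sum_const, smul_eq_mul]
      _ ≤ ∑ C ∈ Fro K P hm n', K * C.card := Finset.sum_le_sum hlower
      _ = K * ∑ C ∈ Fro K P hm n', C.card := by rw [Finset.mul_sum]
      _ = K * ((Fro K P hm n').biUnion id).card := by rw [hsum]
      _ ≤ K * Fintype.card V := Nat.mul_le_mul_left K hUcard
    nlinarith [hc1, hK0]
  by_cases hL : univ \ Ufz K P hm n' = ∅
  · -- no leftover class
    refine ⟨⟨Fro K P hm n', ?_, ?_, ?_⟩, ?_, ?_, ?_⟩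
    · rw [Finset.supIndep_iff_pairwiseDisjoint]
      intro x hx y hy hxy
      exact fro_disj K P hm n' x (Finset.mem_coe.1 hx) y (Finset.mem_coe.1 hy) hxy
    · apply le_antisymm
      · exact Finset.sup_le fun A _ => Finset.subset_univ A
      · exact Finset.sdiff_eq_empty_iff_subset.1 hL
    · exact hnotbotF
    · exact hcount.le
    · intro A hA
      exact hreal A.card (fro_size K P hm hsing hKn n' A hA).2
    · apply degen K P hm G w _ _ hdeg
      intro D hD
      exact Or.inl hD
  · -- with the leftover class
    refine ⟨⟨insert (univ \ Ufz K P hm n') (Fro K P hm n'), ?_, ?_, ?_⟩, ?_, ?_, ?_⟩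
    · rw [Finset.supIndep_iff_pairwiseDisjoint]
      intro x hx y hy hxy
      rcases Finset.mem_insert.1 (Finset.mem_coe.1 hx) with rfl | hxF
      · rcases Finset.mem_insert.1 (Finset.mem_coe.1 hy) with rfl | hyF
        · exact absurd rfl hxy
        · exact Finset.sdiff_disjoint.mono_right (subset_Ufz K P hm hyF)
      · rcases Finset.mem_insert.1 (Finset.mem_coe.1 hy) with rfl | hyF
        · exact (Finset.sdiff_disjoint.mono_right (subset_Ufz K P hm hxF)).symm
        · exact fro_disj K P hm n' x hxF y hyF hxy
    · rw [Finset.sup_insert]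
      apply le_antisymm
      · apply sup_le
        · exact Finset.sdiff_subset
        · exact Finset.sup_le fun A _ => Finset.subset_univ A
      · intro x _
        rw [Finset.sup_eq_union, Finset.mem_union]
        by_cases hxu : x ∈ Ufz K P hm n'
        · exact Or.inr hxu
        · exact Or.inl (mem_sdiff.2 ⟨mem_univ x, hxu⟩)
    · intro h
      rcases Finset.mem_insert.1 h with h | h
      · exact hL h.symm
      · exact hnotbotF h
    · calc (insert (univ \ Ufz K P hm n') (Fro K P hm n')).card
          ≤ (Fro K P hm n').card + 1 := card_insert_le _ _
      _ ≤ K := by omega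
    · intro A hA
      rcases Finset.mem_insert.1 hA with rfl | hAF
      · exact hreal _ (by omega)
      · exact hreal A.card (fro_size K P hm hsing hKn n' A hAF).2
    · apply degen K P hm G w _ _ hdeg
      intro D hD
      rcases Finset.mem_insert.1 hD with h | h
      · exact Or.inr h
      · exact Or.inl h

end Main

theorem statement_8 {V : Type*} [Fintype V] [DecidableEq V] (G : SimpleGraph V) (K : ℕ)
    (hK0 : 0 < K) (hK : K < Fintype.card V) :
    ∃ P : Finpartition (Finset.univ : Finset V),
      P.parts.card ≤ K ∧
      (∀ A ∈ P.parts, (A.card : ℝ) ≤ 2 * (Fintype.card V : ℝ) / K) ∧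
      Degenerate (stww G) (quotGraph G P) := by
  have hne : {w | SeqOK G quotDeg w}.Nonempty :=
    ⟨Fintype.card V, seqOK_exists G (by omega)⟩
  have hmem : SeqOK G quotDeg (stww G) := Nat.sInf_mem hne
  obtain ⟨n', P, hsing, hlast, hmerge, hdeg⟩ := hmem
  exact main_result K P hmerge G (stww G) hK0 hK hsing hlast hdeg


end TwwPaper
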